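/- For every m ≥ 2 there exist 2m symplectic simplices B₁⁺, B₁⁻, …, B_m⁺, B_m⁻ in ℙ(ℝ^{2n}) such that B ⊆ B′* for all distinct B, B′ among them. -/

import Mathlib

open LinearAlgebra.Projectivization Projectivization

/-- The quotient topology on projective space. -/
noncomputable instance (n : ℕ) : TopologicalSpace (Projectivization ℝ (Fin n → ℝ)) :=
  instTopologicalSpaceQuotient

/-- The standard symplectic form `ω(v,v′) = Σᵢ (−1)ⁱ vᵢ v′_{2n+1−i}` on `ℝ^{2n}`
(0-indexed version). -/
def symplForm (n : ℕ) (v w : Fin (2 * n) → ℝ) : ℝ :=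
  ∑ j : Fin (2 * n), (-1 : ℝ) ^ ((j : ℕ) + 1) * v j * w (Fin.rev j)

/-- A symplectic basis of `ℝ^{2n}`: a basis in which the matrix of `ω` is antidiagonal
with alternating entries `±1` (normalized so that the canonical basis is symplectic). -/
def IsSymplecticBasis (n : ℕ) (e : Fin (2 * n) → (Fin (2 * n) → ℝ)) : Prop :=
  LinearIndependent ℝ e ∧ Submodule.span ℝ (Set.range e) = ⊤ ∧
    ∀ i j : Fin (2 * n), symplForm n (e i) (e j)
      = if j = Fin.rev i then (-1 : ℝ) ^ ((i : ℕ) + 1) else 0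

/-- The open symplectic simplex `B = ℙ(ℝ_{>0}-span(e₁,…,e_{2n}))` in `ℙ(ℝ^{2n})`
associated to a symplectic basis `e`. -/
def symplSimplex (n : ℕ) (e : Fin (2 * n) → (Fin (2 * n) → ℝ)) :
    Set (Projectivization ℝ (Fin (2 * n) → ℝ)) :=
  {P | ∃ (v : Fin (2 * n) → ℝ) (hv : v ≠ 0),
    (∃ c : Fin (2 * n) → ℝ, (∀ i, 0 < c i) ∧ v = ∑ i, c i • e i) ∧
    P = Projectivization.mk ℝ v hv}

/-- The dual `B* = {[v] : ℙ(v^⊥) ∩ cl(B) = ∅}` of a subset `B` of `ℙ(ℝ^{2n})`, where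
`v^⊥` is the `ω`-orthogonal hyperplane of `v`. -/
def symplDual (n : ℕ) (B : Set (Projectivization ℝ (Fin (2 * n) → ℝ))) :
    Set (Projectivization ℝ (Fin (2 * n) → ℝ)) :=
  {P | ∃ (v : Fin (2 * n) → ℝ) (hv : v ≠ 0), P = Projectivization.mk ℝ v hv ∧
    ∀ Q ∈ closure B, ∀ (w : Fin (2 * n) → ℝ) (hw : w ≠ 0),
      Q = Projectivization.mk ℝ w hw → symplForm n v w ≠ 0}

namespace SymplAux

-- parity helper
lemma negpow_eq {a b : ℕ} (h : a % 2 = b % 2) : (-1:ℝ)^a = (-1)^b := by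
  rcases Nat.even_or_odd a with ha | ha <;> rcases Nat.even_or_odd b with hb | hb
  · rw [ha.neg_one_pow, hb.neg_one_pow]
  · exfalso; rw [Nat.even_iff] at ha; rw [Nat.odd_iff] at hb; omega
  · exfalso; rw [Nat.odd_iff] at ha; rw [Nat.even_iff] at hb; omega
  · rw [ha.neg_one_pow, hb.neg_one_pow]

lemma negpow_eq_neg {a b : ℕ} (h : a % 2 ≠ b % 2) : (-1:ℝ)^a = -(-1)^b := by
  rcases Nat.even_or_odd a with ha | ha <;> rcases Nat.even_or_odd b with hb | hb
  · exfalso; rw [Nat.even_iff] at ha hb; omega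
  · simp [ha.neg_one_pow, hb.neg_one_pow]
  · simp [ha.neg_one_pow, hb.neg_one_pow]
  · exfalso; rw [Nat.odd_iff] at ha hb; omega

variable {n : ℕ}

lemma symplForm_smul_left (c : ℝ) (v w : Fin (2*n) → ℝ) :
    symplForm n (c • v) w = c * symplForm n v w := by
  simp only [symplForm, Pi.smul_apply, smul_eq_mul, Finset.mul_sum]
  exact Finset.sum_congr rfl fun j _ => by ring

lemma symplForm_smul_right (c : ℝ) (v w : Fin (2*n) → ℝ) :
    symplForm n v (c • w) = c * symplForm n v w := by
  simp only [symplForm, Pi.smul_apply, smul_eq_mul, Finset.mul_sum]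
  exact Finset.sum_congr rfl fun j _ => by ring

lemma symplForm_sum_left {ι : Type*} [Fintype ι] (c : ι → ℝ) (u : ι → Fin (2*n) → ℝ)
    (w : Fin (2*n) → ℝ) :
    symplForm n (∑ i, c i • u i) w = ∑ i, c i * symplForm n (u i) w := by
  unfold symplForm
  have h1 : ∀ j : Fin (2*n), (-1:ℝ)^((j:ℕ)+1) * (∑ i, c i • u i) j * w (Fin.rev j)
      = ∑ i, c i * ((-1:ℝ)^((j:ℕ)+1) * u i j * w (Fin.rev j)) := by
    intro j
    simp only [Finset.sum_apply, Pi.smul_apply, smul_eq_mul, Finset.mul_sum, Finset.sum_mul]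
    exact Finset.sum_congr rfl fun i _ => by ring
  rw [Finset.sum_congr rfl fun j _ => h1 j, Finset.sum_comm]
  exact Finset.sum_congr rfl fun i _ => (Finset.mul_sum _ _ _).symm

lemma symplForm_sum_right {ι : Type*} [Fintype ι] (d : ι → ℝ) (v : Fin (2*n) → ℝ)
    (z : ι → Fin (2*n) → ℝ) :
    symplForm n v (∑ i, d i • z i) = ∑ i, d i * symplForm n v (z i) := by
  unfold symplForm
  have h1 : ∀ j : Fin (2*n), (-1:ℝ)^((j:ℕ)+1) * v j * (∑ i, d i • z i) (Fin.rev j)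
      = ∑ i, d i * ((-1:ℝ)^((j:ℕ)+1) * v j * z i (Fin.rev j)) := by
    intro j
    simp only [Finset.sum_apply, Pi.smul_apply, smul_eq_mul, Finset.mul_sum]
    exact Finset.sum_congr rfl fun i _ => by ring
  rw [Finset.sum_congr rfl fun j _ => h1 j, Finset.sum_comm]
  exact Finset.sum_congr rfl fun i _ => (Finset.mul_sum _ _ _).symm

lemma symplForm_antisymm (v w : Fin (2*n) → ℝ) :
    symplForm n v w = - symplForm n w v := by
  have key : symplForm n v w
      = ∑ j : Fin (2*n), (-1:ℝ)^((Fin.rev j : ℕ) + 1) * v (Fin.rev j) * w j := by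
    unfold symplForm
    refine Fintype.sum_equiv (Fin.revPerm) _ _ fun j => ?_
    simp [Fin.rev_rev]
  rw [key]
  unfold symplForm
  rw [← Finset.sum_neg_distrib]
  refine Finset.sum_congr rfl fun j _ => ?_
  have hrev : ((Fin.rev j : Fin (2*n)) : ℕ) = 2*n - (j.val + 1) := Fin.val_rev j
  have hj : j.val < 2*n := j.isLt
  have : (-1:ℝ)^((Fin.rev j : Fin (2*n)) : ℕ).succ = -(-1)^(j.val+1) := by
    apply negpow_eq_neg; omega
  rw [hrev] at this ⊢
  rw [show (2*n - (j.val+1)) + 1 = (2*n - (j.val+1)).succ from rfl, this]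
  ring

lemma symplForm_self (v : Fin (2*n) → ℝ) : symplForm n v v = 0 := by
  have := symplForm_antisymm v v; linarith

end SymplAux

namespace SymplAux
variable {n m : ℕ}

noncomputable def eps (m : ℕ) : ℝ := Real.pi / (4*m)

lemma eps_pos (hm : 1 ≤ m) : 0 < eps m := by
  have : (0:ℝ) < 4*m := by positivity
  exact div_pos Real.pi_pos this

lemma four_m_eps (hm : 1 ≤ m) : (4*m : ℝ) * eps m = Real.pi := by
  have : (4*m:ℝ) ≠ 0 := by positivity
  rw [eps]; field_simp

lemma sin_eps_pos (hm : 1 ≤ m) : 0 < Real.sin (eps m) := by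
  apply Real.sin_pos_of_pos_of_lt_pi (eps_pos hm)
  have h4 : (4:ℝ) ≤ 4*m := by
    have : (1:ℝ) ≤ m := by exact_mod_cast hm
    nlinarith
  have := four_m_eps hm
  nlinarith [eps_pos hm, Real.pi_pos]

def bi (n : ℕ) (i : Fin (2*n)) : ℕ := min i.val (2*n-1-i.val)

lemma bi_lt (i : Fin (2*n)) : bi n i < n := by
  have := i.isLt; unfold bi; omega

lemma bi_cases {i k : Fin (2*n)} (h : bi n i = bi n k) :
    k.val = i.val ∨ k.val = 2*n-1-i.val := by
  have hi := i.isLt; have hk := k.isLt; unfold bi at h; omega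

lemma bi_rev_eq {i k : Fin (2*n)} (h : k.val = 2*n-1-i.val) : bi n k = bi n i := by
  have hi := i.isLt; have hk := k.isLt; unfold bi; omega

noncomputable def sg (n : ℕ) (i : Fin (2*n)) : ℝ := (-1)^(bi n i + 1)

lemma sg_cases (i : Fin (2*n)) : sg n i = 1 ∨ sg n i = -1 := by
  unfold sg
  rcases Nat.even_or_odd (bi n i + 1) with h | h
  · left; exact h.neg_one_pow
  · right; exact h.neg_one_pow

noncomputable def lam (n m : ℕ) (i : Fin (2*n)) : ℝ :=
  if i.val < n then (Real.sin (eps m))⁻¹ else 1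

lemma lam_pos (hm : 1 ≤ m) (i : Fin (2*n)) : 0 < lam n m i := by
  unfold lam; split
  · exact inv_pos.mpr (sin_eps_pos hm)
  · norm_num

noncomputable def ang (n m : ℕ) (t : ℕ) (i : Fin (2*n)) : ℝ :=
  sg n i * (2*t) * eps m + (if i.val < n then 0 else eps m)

noncomputable def E (n m : ℕ) (t : ℕ) (i : Fin (2*n)) : Fin (2*n) → ℝ :=
  fun l => if l.val = bi n i then lam n m i * Real.cos (ang n m t i)
    else if l.val = 2*n-1-bi n i then lam n m i * Real.sin (ang n m t i) else 0

/-- Master pairing computation. -/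
lemma symplForm_E (s t : ℕ) (i k : Fin (2*n)) :
    symplForm n (E n m s i) (E n m t k)
      = if bi n i = bi n k
          then sg n i * lam n m i * lam n m k * Real.sin (ang n m t k - ang n m s i)
          else 0 := by
  have hbi := bi_lt i
  have hbk' := bi_lt k
  have hn : 1 ≤ n := by have := i.isLt; omega
  set j0 : Fin (2*n) := ⟨bi n i, by omega⟩ with hj0def
  set j1 : Fin (2*n) := ⟨2*n-1-bi n i, by omega⟩ with hj1def
  have hj0v : (j0:ℕ) = bi n i := rfl
  have hj1v : (j1:ℕ) = 2*n-1-bi n i := rfl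
  have hj01 : j0 ≠ j1 := by
    intro h
    have := congrArg Fin.val h
    rw [hj0v, hj1v] at this; omega
  have hsum : symplForm n (E n m s i) (E n m t k)
      = ∑ j ∈ ({j0, j1} : Finset (Fin (2*n))),
          (-1:ℝ)^((j:ℕ)+1) * E n m s i j * E n m t k (Fin.rev j) := by
    unfold symplForm
    symm
    apply Finset.sum_subset (Finset.subset_univ _)
    intro x _ hx
    simp only [Finset.mem_insert, Finset.mem_singleton] at hx
    push_neg at hx
    have hx0 : x.val ≠ bi n i := by
      intro h; exact hx.1 (Fin.ext (by rw [h, hj0v]))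
    have hx1 : x.val ≠ 2*n-1-bi n i := by
      intro h; exact hx.2 (Fin.ext (by rw [h, hj1v]))
    have hz : E n m s i x = 0 := by unfold E; rw [if_neg hx0, if_neg hx1]
    rw [hz]; ring
  rw [hsum, Finset.sum_pair hj01]
  have hrev0 : (Fin.rev j0).val = 2*n-1-bi n i := by rw [Fin.val_rev, hj0v]; omega
  have hrev1 : (Fin.rev j1).val = bi n i := by rw [Fin.val_rev, hj1v]; omega
  have hne01 : (2*n-1-bi n i : ℕ) ≠ bi n i := by omega
  have hE0 : E n m s i j0 = lam n m i * Real.cos (ang n m s i) := by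
    unfold E; rw [if_pos hj0v]
  have hE1 : E n m s i j1 = lam n m i * Real.sin (ang n m s i) := by
    unfold E; rw [if_neg (by rw [hj1v]; omega), if_pos hj1v]
  by_cases hbk : bi n i = bi n k
  · have hEk0 : E n m t k (Fin.rev j0) = lam n m k * Real.sin (ang n m t k) := by
      unfold E
      rw [if_neg (by rw [hrev0, ← hbk]; omega), if_pos (by rw [hrev0, hbk])]
    have hEk1 : E n m t k (Fin.rev j1) = lam n m k * Real.cos (ang n m t k) := by
      unfold E; rw [if_pos (by rw [hrev1, hbk])]
    rw [hE0, hE1, hEk0, hEk1, if_pos hbk]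
    have hs0 : (-1:ℝ)^((j0:ℕ)+1) = sg n i := by rw [hj0v]; rfl
    have hs1 : (-1:ℝ)^((j1:ℕ)+1) = -sg n i := by
      unfold sg; apply negpow_eq_neg; rw [hj1v]; omega
    rw [hs0, hs1, Real.sin_sub]; ring
  · have hEk0 : E n m t k (Fin.rev j0) = 0 := by
      unfold E
      rw [if_neg (by rw [hrev0]; omega), if_neg (by rw [hrev0]; omega)]
    have hEk1 : E n m t k (Fin.rev j1) = 0 := by
      unfold E
      rw [if_neg (by rw [hrev1]; intro h; exact hbk (by omega)),
        if_neg (by rw [hrev1]; omega)]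
    rw [hEk0, hEk1, if_neg hbk]; ring

end SymplAux

section Part3
namespace SymplAux
variable {n m : ℕ}

lemma sin_pos_aux (hm : 1 ≤ m) {s t : ℕ} (hst : s < t) (ht : t ≤ 2*m - 1) {δ : ℝ}
    (h1 : -1 ≤ δ) (h2 : δ ≤ 1) :
    0 < Real.sin ((2*(t:ℝ) - 2*(s:ℝ) + δ) * eps m) := by
  have hε := eps_pos hm
  have hπ := four_m_eps hm
  have hcast : (s:ℝ) + 1 ≤ (t:ℝ) := by exact_mod_cast hst
  have htc : (t:ℝ) ≤ 2*(m:ℝ) - 1 := by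
    have h2m : (t:ℕ) ≤ 2*m - 1 := ht
    have hm2 : 1 ≤ 2*m := by omega
    have := (Nat.cast_le (α := ℝ)).mpr h2m
    push_cast [Nat.cast_sub hm2] at this
    linarith
  apply Real.sin_pos_of_pos_of_lt_pi
  · nlinarith
  · rw [← hπ]; nlinarith

lemma aIdx_bounds (i : Fin (2*n)) :
    (0:ℝ) ≤ (if i.val < n then (0:ℝ) else 1) ∧ (if i.val < n then (0:ℝ) else 1) ≤ 1 := by
  split <;> norm_num

/-- Positivity of the cross pairing for s < t. -/
lemma cross_pos (hm : 1 ≤ m) {s t : ℕ} (hst : s < t) (ht : t ≤ 2*m - 1)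
    (i k : Fin (2*n)) (hb : bi n i = bi n k) :
    0 < symplForm n (E n m s i) (E n m t k) := by
  rw [symplForm_E, if_pos hb]
  have hlami := lam_pos hm i
  have hlamk := lam_pos hm k
  have hsgk : sg n k = sg n i := by unfold sg; rw [hb]
  set A : ℝ := (if k.val < n then (0:ℝ) else 1) with hA
  set B : ℝ := (if i.val < n then (0:ℝ) else 1) with hB
  have hAb := aIdx_bounds k
  have hBb := aIdx_bounds i
  rw [← hA] at hAb; rw [← hB] at hBb
  have hang : ang n m t k - ang n m s i
      = sg n i * (2*(t:ℝ) - 2*(s:ℝ)) * eps m + (A - B) * eps m := by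
    unfold ang
    rw [hsgk, hA, hB]; split_ifs <;> ring
  rcases sg_cases (n := n) i with hs | hs
  · have : ang n m t k - ang n m s i = (2*(t:ℝ) - 2*(s:ℝ) + (A - B)) * eps m := by
      rw [hang, hs]; ring
    rw [this, hs]
    have := sin_pos_aux hm hst ht (δ := A - B) (by linarith [hAb.1, hAb.2, hBb.1, hBb.2])
      (by linarith [hAb.1, hAb.2, hBb.1, hBb.2])
    nlinarith [mul_pos (mul_pos hlami hlamk) this]
  · have : ang n m t k - ang n m s i = -((2*(t:ℝ) - 2*(s:ℝ) + (B - A)) * eps m) := by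
      rw [hang, hs]; ring
    rw [this, hs, Real.sin_neg]
    have := sin_pos_aux hm hst ht (δ := B - A) (by linarith [hAb.1, hAb.2, hBb.1, hBb.2])
      (by linarith [hAb.1, hAb.2, hBb.1, hBb.2])
    nlinarith [mul_pos (mul_pos hlami hlamk) this]

/-- The pairing property within one basis. -/
lemma pairing (hm : 1 ≤ m) (t : ℕ) (i k : Fin (2*n)) :
    symplForm n (E n m t i) (E n m t k)
      = if k = Fin.rev i then (-1:ℝ)^((i:ℕ)+1) else 0 := by
  have hbi := bi_lt i
  have hbk' := bi_lt k
  have hn : 1 ≤ n := by have := i.isLt; omega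
  have hki := i.isLt
  have hkk := k.isLt
  have hrevval : (Fin.rev i).val = 2*n-1-i.val := by rw [Fin.val_rev]; omega
  have hkrev : (k = Fin.rev i) ↔ k.val = 2*n-1-i.val := by
    constructor
    · intro h; rw [h, hrevval]
    · intro h; exact Fin.ext (by rw [h, hrevval])
  rw [symplForm_E]
  by_cases hb : bi n i = bi n k
  · rw [if_pos hb]
    rcases bi_cases hb with hik | hik
    · -- k = i
      have hki' : k = i := Fin.ext hik
      subst hki'
      have hne : ¬ (k = Fin.rev k) := by rw [hkrev]; omega
      rw [if_neg hne, sub_self, Real.sin_zero]; ring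
    · -- k = rev i
      rw [if_pos (hkrev.mpr hik)]
      have hsinε := sin_eps_pos hm
      have hinv : (Real.sin (eps m))⁻¹ * Real.sin (eps m) = 1 :=
        inv_mul_cancel₀ (ne_of_gt hsinε)
      have hsgk : sg n k = sg n i := by unfold sg; rw [hb]
      have hangd : ang n m t k - ang n m t i
          = (if k.val < n then (0:ℝ) else eps m)
            - (if i.val < n then (0:ℝ) else eps m) := by
        unfold ang; rw [hsgk]; ring
      by_cases hi : i.val < n
      · have hk : ¬ (k.val < n) := by omega
        have h1 : ang n m t k - ang n m t i = eps m := by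
          rw [hangd, if_neg hk, if_pos hi]; ring
        have hbii : bi n i = i.val := by unfold bi; omega
        have hlami : lam n m i = (Real.sin (eps m))⁻¹ := by unfold lam; rw [if_pos hi]
        have hlamk : lam n m k = 1 := by unfold lam; rw [if_neg hk]
        rw [h1, hlami, hlamk]
        unfold sg; rw [hbii]
        calc (-1:ℝ)^(i.val+1) * (Real.sin (eps m))⁻¹ * 1 * Real.sin (eps m)
            = (-1:ℝ)^(i.val+1) * ((Real.sin (eps m))⁻¹ * Real.sin (eps m)) := by ring
          _ = (-1:ℝ)^(i.val+1) := by rw [hinv, mul_one]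
      · have hk : k.val < n := by omega
        have h1 : ang n m t k - ang n m t i = -eps m := by
          rw [hangd, if_neg hi, if_pos hk]; ring
        have hbii : bi n i = 2*n-1-i.val := by unfold bi; omega
        have hlami : lam n m i = 1 := by unfold lam; rw [if_neg hi]
        have hlamk : lam n m k = (Real.sin (eps m))⁻¹ := by unfold lam; rw [if_pos hk]
        rw [h1, hlami, hlamk, Real.sin_neg]
        unfold sg; rw [hbii]
        have hpow : (-(-1:ℝ)^(2*n-1-i.val+1)) = (-1:ℝ)^(i.val+1) := by
          rw [negpow_eq_neg (a := 2*n-1-i.val+1) (b := i.val+1) (by omega)]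
          ring
        calc (-1:ℝ)^(2*n-1-i.val+1) * 1 * (Real.sin (eps m))⁻¹ * (-Real.sin (eps m))
            = (-(-1:ℝ)^(2*n-1-i.val+1)) * ((Real.sin (eps m))⁻¹ * Real.sin (eps m)) := by
              ring
          _ = (-1:ℝ)^(i.val+1) := by rw [hpow, hinv, mul_one]
  · rw [if_neg hb, if_neg]
    intro h
    exact hb (bi_rev_eq (hkrev.mp h)).symm

end SymplAux
end Part3

section Part4
namespace SymplAux
variable {n m : ℕ}

lemma E_linearIndependent (hm : 1 ≤ m) (t : ℕ) :
    LinearIndependent ℝ (E n m t) := by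
  rw [Fintype.linearIndependent_iff]
  intro g hg i0
  have h0 : symplForm n (∑ i, g i • E n m t i) (E n m t (Fin.rev i0)) = 0 := by
    rw [hg]
    simp [symplForm]
  rw [symplForm_sum_left] at h0
  have hsum : ∑ i, g i * symplForm n (E n m t i) (E n m t (Fin.rev i0))
      = g i0 * (-1:ℝ)^((i0:ℕ)+1) := by
    rw [Finset.sum_eq_single i0]
    · rw [pairing hm]
      rw [if_pos rfl]
    · intro b _ hb
      rw [pairing hm, if_neg, mul_zero]
      intro h
      exact hb (Fin.rev_injective h).symm
    · intro h; exact absurd (Finset.mem_univ i0) h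
  rw [hsum] at h0
  have : (-1:ℝ)^((i0:ℕ)+1) ≠ 0 := pow_ne_zero _ (by norm_num)
  exact (mul_eq_zero.mp h0).resolve_right this

lemma E_span (hm : 1 ≤ m) (t : ℕ) :
    Submodule.span ℝ (Set.range (E n m t)) = ⊤ := by
  apply (E_linearIndependent (n := n) hm t).span_eq_top_of_card_eq_finrank'
  simp [Module.finrank_fin_fun]

/-- Key positivity lemma. -/
lemma key (hm : 1 ≤ m) {s t : ℕ} (hst : s < t) (ht : t ≤ 2*m - 1)
    (c d : Fin (2*n) → ℝ) (hc : ∀ i, 0 ≤ c i) (hd : ∀ i, 0 ≤ d i)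
    (k0 : Fin (2*n)) (hck : 0 < c k0) (hdk : 0 < d k0) :
    0 < symplForm n (∑ i, c i • E n m s i) (∑ i, d i • E n m t i) := by
  rw [symplForm_sum_left]
  have hterm : ∀ i k : Fin (2*n), 0 ≤ d k * symplForm n (E n m s i) (E n m t k) := by
    intro i k
    by_cases hb : bi n i = bi n k
    · exact mul_nonneg (hd k) (le_of_lt (cross_pos hm hst ht i k hb))
    · rw [symplForm_E, if_neg hb, mul_zero]
  apply Finset.sum_pos'
  · intro i _
    rw [symplForm_sum_right]
    apply mul_nonneg (hc i)
    exact Finset.sum_nonneg fun k _ => hterm i k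
  · refine ⟨k0, Finset.mem_univ _, ?_⟩
    rw [symplForm_sum_right]
    apply mul_pos hck
    apply Finset.sum_pos'
    · exact fun k _ => hterm k0 k
    · exact ⟨k0, Finset.mem_univ _,
        mul_pos hdk (cross_pos hm hst ht k0 k0 rfl)⟩

end SymplAux
end Part4

namespace SymplAux

def tOf (m : ℕ) (p : Fin m × Bool) : ℕ := 2 * p.1.val + (if p.2 then 1 else 0)

lemma tOf_le {m : ℕ} (p : Fin m × Bool) : tOf m p ≤ 2*m - 1 := by
  have := p.1.isLt
  unfold tOf; split <;> omega

lemma tOf_inj {m : ℕ} {p q : Fin m × Bool} (h : p ≠ q) : tOf m p ≠ tOf m q := by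
  intro he
  apply h
  have h2 : p.2 = q.2 := by
    by_contra hb
    unfold tOf at he
    rcases Bool.eq_false_or_eq_true p.2 with h1 | h1 <;>
      rcases Bool.eq_false_or_eq_true q.2 with h3 | h3
    · exact hb (h1.trans h3.symm)
    · rw [h1, h3] at he; simp at he; omega
    · rw [h1, h3] at he; simp at he; omega
    · exact hb (h1.trans h3.symm)
  have h1 : p.1 = q.1 := by
    unfold tOf at he
    rw [h2] at he
    rcases Bool.eq_false_or_eq_true q.2 with h3 | h3 <;> rw [h3] at he <;> simp at he <;>
      first
        | exact he
        | exact Fin.ext (by omega)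
  exact Prod.ext h1 h2

end SymplAux

namespace SymplAux
variable {n : ℕ}

/-- The "closed simplex" determined by a basis `e`. -/
def closedCone (n : ℕ) (e : Fin (2*n) → (Fin (2*n) → ℝ)) :
    Set (Projectivization ℝ (Fin (2*n) → ℝ)) :=
  {P | ∃ (w : Fin (2*n) → ℝ) (hw : w ≠ 0),
    (∃ c : Fin (2*n) → ℝ, (∀ i, 0 ≤ c i) ∧ w = ∑ i, c i • e i) ∧
    P = Projectivization.mk ℝ w hw}

lemma isClosed_closedCone (e : Fin (2*n) → (Fin (2*n) → ℝ))
    (hli : LinearIndependent ℝ e) (hsp : Submodule.span ℝ (Set.range e) = ⊤) :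
    IsClosed (closedCone n e) := by
  classical
  -- the basis
  let b : Module.Basis (Fin (2*n)) ℝ (Fin (2*n) → ℝ) := Module.Basis.mk hli (le_of_eq hsp.symm)
  let L : (Fin (2*n) → ℝ) ≃L[ℝ] (Fin (2*n) → ℝ) :=
    (b.equivFun.symm : (Fin (2*n) → ℝ) ≃ₗ[ℝ] (Fin (2*n) → ℝ)).toContinuousLinearEquiv
  have hLb : ∀ c : Fin (2*n) → ℝ, L c = ∑ i, c i • e i := by
    intro c
    show b.equivFun.symm c = _
    rw [Module.Basis.equivFun_symm_apply]
    exact Finset.sum_congr rfl fun i _ => by rw [Module.Basis.mk_apply]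
  set C : Set (Fin (2*n) → ℝ) := L '' {c | ∀ i, 0 ≤ c i} with hC
  have horth : IsClosed {c : Fin (2*n) → ℝ | ∀ i, 0 ≤ c i} := by
    have : {c : Fin (2*n) → ℝ | ∀ i, 0 ≤ c i} = ⋂ i, {c | 0 ≤ c i} := by
      ext c; simp
    rw [this]
    exact isClosed_iInter fun i => isClosed_le continuous_const (continuous_apply i)
  have hCclosed : IsClosed C := (L.toHomeomorph.isClosed_image).mpr horth
  have hnegC : IsClosed ((fun v : Fin (2*n) → ℝ => -v) '' C) := by
    have : (fun v : Fin (2*n) → ℝ => -v) = (Homeomorph.neg (Fin (2*n) → ℝ)) := rfl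
    rw [this]
    exact ((Homeomorph.neg (Fin (2*n) → ℝ)).isClosed_image).mpr hCclosed
  have hqm : Topology.IsQuotientMap
      (@Quotient.mk' {v : Fin (2*n) → ℝ // v ≠ 0}
        (projectivizationSetoid ℝ (Fin (2*n) → ℝ)) :
          {v : Fin (2*n) → ℝ // v ≠ 0} → Projectivization ℝ (Fin (2*n) → ℝ)) :=
    isQuotientMap_quotient_mk'
  refine (hqm.isClosed_preimage (s := closedCone n e)).mp ?_
  have hpre : (@Quotient.mk' {v : Fin (2*n) → ℝ // v ≠ 0}
      (projectivizationSetoid ℝ (Fin (2*n) → ℝ)) :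
        {v : Fin (2*n) → ℝ // v ≠ 0} → Projectivization ℝ (Fin (2*n) → ℝ))
      ⁻¹' (closedCone n e)
      = Subtype.val ⁻¹' (C ∪ ((fun v : Fin (2*n) → ℝ => -v) '' C)) := by
    ext x
    have hmk : (@Quotient.mk' {v : Fin (2*n) → ℝ // v ≠ 0}
        (projectivizationSetoid ℝ (Fin (2*n) → ℝ)) x : Projectivization ℝ (Fin (2*n) → ℝ))
        = Projectivization.mk ℝ x.val x.2 := rfl
    simp only [Set.mem_preimage, Set.mem_union]
    constructor
    · rintro ⟨w, hw, ⟨c, hc, rfl⟩, hPmk⟩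
      rw [hmk, Projectivization.mk_eq_mk_iff] at hPmk
      obtain ⟨a, ha⟩ := hPmk
      rcases lt_or_gt_of_ne (Units.ne_zero a : (a:ℝ) ≠ 0) with haneg | hapos
      · right
        refine ⟨(-(a:ℝ)) • ∑ i, c i • e i, ?_, ?_⟩
        · rw [hC]
          refine ⟨fun i => (-(a:ℝ)) * c i, fun i => mul_nonneg (by linarith) (hc i), ?_⟩
          rw [hLb, Finset.smul_sum]
          exact Finset.sum_congr rfl fun i _ => by rw [smul_smul]
        · rw [← ha]; simp [Units.smul_def]
      · left
        rw [hC]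
        refine ⟨fun i => (a:ℝ) * c i, fun i => mul_nonneg (le_of_lt hapos) (hc i), ?_⟩
        rw [hLb, ← ha, Units.smul_def, Finset.smul_sum]
        exact Finset.sum_congr rfl fun i _ => by rw [smul_smul]
    · rintro (hx | ⟨z, hz, hzx⟩)
      · rw [hC] at hx
        obtain ⟨c, hc, hcx⟩ := hx
        rw [hLb] at hcx
        exact ⟨x.val, x.2, ⟨c, hc, hcx.symm⟩, hmk⟩
      · rw [hC] at hz
        obtain ⟨c, hc, hcz⟩ := hz
        rw [hLb] at hcz
        have hzne : z ≠ 0 := by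
          intro h; apply x.2; rw [← hzx, h]; simp
        refine ⟨z, hzne, ⟨c, hc, hcz.symm⟩, ?_⟩
        rw [hmk, Projectivization.mk_eq_mk_iff]
        exact ⟨-1, by rw [Units.smul_def]; simp [hzx]⟩
  rw [hpre]
  exact (hCclosed.union hnegC).preimage continuous_subtype_val

lemma closure_simplex_subset (e : Fin (2*n) → (Fin (2*n) → ℝ))
    (hli : LinearIndependent ℝ e) (hsp : Submodule.span ℝ (Set.range e) = ⊤) :
    closure (symplSimplex n e) ⊆ closedCone n e := by
  apply closure_minimal _ (isClosed_closedCone e hli hsp)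
  rintro P ⟨v, hv, ⟨c, hc, hvc⟩, hP⟩
  exact ⟨v, hv, ⟨c, fun i => le_of_lt (hc i), hvc⟩, hP⟩

end SymplAux

namespace SymplAux

lemma dual_containment (n m : ℕ) (hm1 : 1 ≤ m) (p q : Fin m × Bool) (hpq : p ≠ q) :
    symplSimplex n (E n m (tOf m p)) ⊆ symplDual n (symplSimplex n (E n m (tOf m q))) := by
  rintro P ⟨v, hv, ⟨c, hc, hvc⟩, hPmk⟩
  refine ⟨v, hv, hPmk, ?_⟩
  intro Q hQ w hw hQmk
  have hQ' : Q ∈ closedCone n (E n m (tOf m q)) :=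
    closure_simplex_subset _ (E_linearIndependent hm1 _) (E_span hm1 _) hQ
  obtain ⟨w0, hw0, ⟨d, hd, hw0d⟩, hQmk0⟩ := hQ'
  rw [hQmk, Projectivization.mk_eq_mk_iff] at hQmk0
  obtain ⟨a, ha⟩ := hQmk0
  have hdk : ∃ k0, 0 < d k0 := by
    by_contra hcon
    push_neg at hcon
    apply hw0
    rw [hw0d]
    have hz : ∀ k, d k = 0 := fun k => le_antisymm (hcon k) (hd k)
    simp [hz]
  obtain ⟨k0, hdk0⟩ := hdk
  have hvw0 : symplForm n v w0 ≠ 0 := by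
    rcases lt_or_gt_of_ne (tOf_inj hpq) with hlt | hgt
    · rw [hvc, hw0d]
      exact ne_of_gt (key hm1 hlt (tOf_le q) c d (fun i => (hc i).le) hd k0 (hc k0) hdk0)
    · rw [symplForm_antisymm, hvc, hw0d]
      exact neg_ne_zero.mpr
        (ne_of_gt (key hm1 hgt (tOf_le p) d c hd (fun i => (hc i).le) k0 hdk0 (hc k0)))
  rw [show w = (a:ℝ) • w0 from by rw [← ha, Units.smul_def]]
  rw [symplForm_smul_right]
  exact mul_ne_zero (Units.ne_zero a) hvw0

end SymplAux

open SymplAux in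
/-- For every `m ≥ 2` there exist `2m` pairwise distinct symplectic simplices
`B₁⁺, B₁⁻, …, B_m⁺, B_m⁻` in `ℙ(ℝ^{2n})` such that `B ⊆ B′*` for all distinct
`B, B′` among them. -/
theorem exists_symplSimplices_in_duals (n m : ℕ) (hn : 1 ≤ n) (hm : 2 ≤ m) :
    ∃ e : Fin m × Bool → (Fin (2 * n) → (Fin (2 * n) → ℝ)),
      (∀ p, IsSymplecticBasis n (e p)) ∧
      (∀ p q, p ≠ q → symplSimplex n (e p) ≠ symplSimplex n (e q)) ∧
      (∀ p q, p ≠ q → symplSimplex n (e p) ⊆ symplDual n (symplSimplex n (e q))) := by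
  have hm1 : 1 ≤ m := le_trans one_le_two hm
  refine ⟨fun p => E n m (tOf m p), ?_, ?_, ?_⟩
  case _ =>
    intro p
    exact ⟨E_linearIndependent hm1 _, E_span hm1 _, fun i j => pairing hm1 _ i j⟩
  case _ =>
    -- distinctness; proved using duality below
    intro p q hpq h
    have hdual := dual_containment n m hm1 p q hpq
    -- the all-ones point of the simplex of p
    have hv0 : (∑ i, (1:ℝ) • E n m (tOf m p) i) ≠ 0 := by
      intro h0
      have := (Fintype.linearIndependent_iff.mp (E_linearIndependent hm1 (tOf m p)))
        (fun _ => 1) h0 ⟨0, by omega⟩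
      norm_num at this
    obtain ⟨v, hvne, hveq⟩ : ∃ v : Fin (2*n) → ℝ, v ≠ 0
        ∧ v = ∑ i, (1:ℝ) • E n m (tOf m p) i := ⟨_, hv0, rfl⟩
    have hP : Projectivization.mk ℝ v hvne ∈ symplSimplex n (E n m (tOf m p)) :=
      ⟨v, hvne, ⟨fun _ => 1, fun _ => one_pos, hveq⟩, rfl⟩
    have hPd := hdual hP
    obtain ⟨v', hv', hPmk', hforall⟩ := hPd
    have hPcl : Projectivization.mk ℝ v hvne
        ∈ closure (symplSimplex n (E n m (tOf m q))) := subset_closure (h ▸ hP)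
    have hne := hforall _ hPcl v hvne rfl
    rw [Projectivization.mk_eq_mk_iff] at hPmk'
    obtain ⟨a, ha⟩ := hPmk'
    apply hne
    rw [show v = (a:ℝ) • v' from by rw [← ha, Units.smul_def]]
    rw [symplForm_smul_right, symplForm_self, mul_zero]
  case _ =>
    exact fun p q hpq => dual_containment n m hm1 p q hpq
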